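/- arXiv:0802.1361 — 2 statements merged into one kernel-verified Lean document; each statement's English description precedes it below -/
import Mathlib

section
/- Contracting a boundary edge of a triangulation graph of a polygon with n ≥ 4 vertices yields a triangulation graph of a polygon with n−1 vertices. -/
open Finset

/-- Vertices `i` and `j` are consecutive on the Hamiltonian cycle of the `n`-gon. -/
def adjOnCycle (n : ℕ) (i j : Fin n) : Prop :=
  (i.val + 1) % n = j.val ∨ (j.val + 1) % n = i.val

instance (n : ℕ) (i j : Fin n) : Decidable (adjOnCycle n i j) := by
  unfold adjOnCycle; infer_instance

/-- A boundary edge of the polygon: a pair of consecutive vertices. -/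
def isBoundaryEdge (n : ℕ) (e : Finset (Fin n)) : Prop :=
  ∃ i j : Fin n, i ≠ j ∧ adjOnCycle n i j ∧ e = {i, j}

/-- A diagonal pair of the polygon: a pair of distinct non-consecutive vertices. -/
def isDiagPair (n : ℕ) (e : Finset (Fin n)) : Prop :=
  ∃ i j : Fin n, i ≠ j ∧ ¬ adjOnCycle n i j ∧ e = {i, j}

/-- Two chords of the convex `n`-gon cross (interleave strictly). -/
def crossing (n : ℕ) (e f : Finset (Fin n)) : Prop :=
  ∃ a b c d : Fin n, e = {a, b} ∧ f = {c, d} ∧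
    a.val < c.val ∧ c.val < b.val ∧ b.val < d.val

/-- A triangulation graph of a polygon with `n` vertices (a maximal outerplanar
graph): the vertices `Fin n` in convex position together with a maximal
(i.e. of cardinality `n - 3`) set of pairwise noncrossing diagonals. -/
structure PolyTriangulation (n : ℕ) where
  diags : Finset (Finset (Fin n))
  diags_valid : ∀ e ∈ diags, isDiagPair n e
  noncrossing : ∀ e ∈ diags, ∀ f ∈ diags, ¬ crossing n e f
  maximal : diags.card = n - 3

/-- An edge of the triangulation graph: a boundary edge or a diagonal. -/
def PolyTriangulation.isEdge {n : ℕ} (T : PolyTriangulation n) (e : Finset (Fin n)) : Prop :=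
  isBoundaryEdge n e ∨ e ∈ T.diags

/-- A triangular face of a maximal outerplanar graph is the same as a 3-cycle. -/
def PolyTriangulation.isTriangle {n : ℕ} (T : PolyTriangulation n) (t : Finset (Fin n)) : Prop :=
  ∃ a b c : Fin n, a ≠ b ∧ a ≠ c ∧ b ≠ c ∧ t = {a, b, c} ∧
    T.isEdge {a, b} ∧ T.isEdge {a, c} ∧ T.isEdge {b, c}

/-- A vertex is incident to (covered by) the set `D` of edges/diagonals. -/
def incidentTo {n : ℕ} (D : Finset (Finset (Fin n))) (v : Fin n) : Prop :=
  ∃ e ∈ D, v ∈ e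

/-- A (diagonal) 2-dominating set: a set of edges and diagonals of `T` such that
every triangular face has at least two of its vertices incident to the set. -/
def TwoDominating {n : ℕ} (T : PolyTriangulation n) (D : Finset (Finset (Fin n))) : Prop :=
  (∀ e ∈ D, T.isEdge e) ∧
  ∀ t, T.isTriangle t →
    2 ≤ (t.filter (fun v => ∃ e ∈ D, v ∈ e)).card

/-- An edge 2-dominating set: a set of boundary edges of `T` such that
every triangular face has at least two of its vertices incident to the set. -/
def EdgeTwoDominating {n : ℕ} (T : PolyTriangulation n) (D : Finset (Finset (Fin n))) : Prop :=
  (∀ e ∈ D, isBoundaryEdge n e) ∧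
  ∀ t, T.isTriangle t →
    2 ≤ (t.filter (fun v => ∃ e ∈ D, v ∈ e)).card

/-- The map contracting the boundary edge between vertex `i` and its cyclic
successor `i+1`, identifying them and renumbering the vertices. -/
def contractMap (n : ℕ) (hn : 4 ≤ n) (i : Fin n) (v : Fin n) : Fin (n - 1) :=
  ⟨(if v.val ≤ i.val then v.val else v.val - 1) % (n - 1),
    Nat.mod_lt _ (by omega)⟩

namespace ContractAux

def Good (N : ℕ) (p : ℕ × ℕ) : Prop :=
  p.1 + 2 ≤ p.2 ∧ p.2 ≤ N ∧ ¬(p.1 = 0 ∧ p.2 = N)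

def Cross (p q : ℕ × ℕ) : Prop :=
  (p.1 < q.1 ∧ q.1 < p.2 ∧ p.2 < q.2) ∨ (q.1 < p.1 ∧ p.1 < q.2 ∧ q.2 < p.2)

lemma Cross_irrefl (p : ℕ × ℕ) : ¬ Cross p p := by
  intro hc
  have hc' : (p.1 < p.1 ∧ p.1 < p.2 ∧ p.2 < p.2) ∨ (p.1 < p.1 ∧ p.1 < p.2 ∧ p.2 < p.2) := hc
  omega

lemma Cross.symm {p q : ℕ × ℕ} (h : Cross p q) : Cross q p := by
  rcases h with h | h
  · exact Or.inr h
  · exact Or.inl h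

def gg (a v : ℕ) : ℕ := if v ≤ a then v else v - 1

lemma gg_spec (a v : ℕ) : (v ≤ a ∧ gg a v = v) ∨ (a < v ∧ gg a v = v - 1) := by
  unfold gg; split_ifs with h
  · exact Or.inl ⟨h, rfl⟩
  · exact Or.inr ⟨Nat.lt_of_not_le h, rfl⟩

def hh (a v : ℕ) : ℕ := if v ≤ a then v else v + 1

lemma hh_spec (a v : ℕ) : (v ≤ a ∧ hh a v = v) ∨ (a < v ∧ hh a v = v + 1) := by
  unfold hh; split_ifs with h
  · exact Or.inl ⟨h, rfl⟩
  · exact Or.inr ⟨Nat.lt_of_not_le h, rfl⟩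

section Step

variable {N : ℕ} {F : Finset (ℕ × ℕ)} {I : ℕ × ℕ}

lemma hub_lemma (hG : ∀ p ∈ F, Good N p) (hC : ∀ p ∈ F, ∀ q ∈ F, ¬ Cross p q)
    (hI : I ∈ F) (hmin : ∀ p ∈ F, I.2 - I.1 ≤ p.2 - p.1) :
    ∀ p ∈ F, p ≠ I → (p.1 ≤ I.1 ∨ I.2 ≤ p.1) ∧ (p.2 ≤ I.1 ∨ I.2 ≤ p.2) := by
  intro p hp hpI
  obtain ⟨hp2, hpN, -⟩ := hG p hp
  obtain ⟨hI2, hIN, -⟩ := hG I hI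
  have hmp := hmin p hp
  have hc1 : ¬ ((I.1 < p.1 ∧ p.1 < I.2 ∧ I.2 < p.2) ∨ (p.1 < I.1 ∧ I.1 < p.2 ∧ p.2 < I.2)) :=
    hC I hI p hp
  have hc2 : ¬ ((p.1 < I.1 ∧ I.1 < p.2 ∧ p.2 < I.2) ∨ (I.1 < p.1 ∧ p.1 < I.2 ∧ I.2 < p.2)) :=
    hC p hp I hI
  constructor
  · by_contra hcon
    push_neg at hcon
    rcases Nat.lt_or_ge I.2 p.2 with h2 | h2
    · exact hc1 (Or.inl ⟨by omega, by omega, h2⟩)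
    · omega
  · by_contra hcon
    push_neg at hcon
    rcases Nat.lt_or_ge p.1 I.1 with h2 | h2
    · exact hc2 (Or.inl ⟨h2, by omega, by omega⟩)
    · omega

lemma hend_lemma (hG : ∀ p ∈ F, Good N p) (hC : ∀ p ∈ F, ∀ q ∈ F, ¬ Cross p q)
    (hI : I ∈ F) (hmin : ∀ p ∈ F, I.2 - I.1 ≤ p.2 - p.1) :
    ∀ p ∈ F, p.1 ≠ I.1 + 1 ∧ p.2 ≠ I.1 + 1 := by
  intro p hp
  obtain ⟨hI2, -, -⟩ := hG I hI
  by_cases hpI : p = I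
  · subst hpI; omega
  · have := hub_lemma hG hC hI hmin p hp hpI; omega

lemma good_img (hG : ∀ p ∈ F, Good N p) (hC : ∀ p ∈ F, ∀ q ∈ F, ¬ Cross p q)
    (hI : I ∈ F) (hmin : ∀ p ∈ F, I.2 - I.1 ≤ p.2 - p.1) :
    ∀ p ∈ F, (p = I → I.1 + 3 ≤ I.2) → Good (N - 1) (gg I.1 p.1, gg I.1 p.2) := by
  intro p hp hcond
  obtain ⟨hp2, hpN, hp0⟩ := hG p hp
  obtain ⟨hI2, hIN, hI0⟩ := hG I hI
  have s1 := gg_spec I.1 p.1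
  have s2 := gg_spec I.1 p.2
  show gg I.1 p.1 + 2 ≤ gg I.1 p.2 ∧ gg I.1 p.2 ≤ N - 1 ∧
    ¬(gg I.1 p.1 = 0 ∧ gg I.1 p.2 = N - 1)
  by_cases hpI : p = I
  · have h3 := hcond hpI
    subst hpI
    omega
  · have hu := hub_lemma hG hC hI hmin p hp hpI
    have hmp := hmin p hp
    have hPI : p.1 ≠ I.1 ∨ p.2 ≠ I.2 := by
      by_contra hcc; push_neg at hcc; exact hpI (Prod.ext hcc.1 hcc.2)
    omega

lemma cross_img {a : ℕ} (p q : ℕ × ℕ) (h : ¬ Cross p q) :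
    ¬ Cross (gg a p.1, gg a p.2) (gg a q.1, gg a q.2) := by
  have s1 := gg_spec a p.1
  have s2 := gg_spec a p.2
  have s3 := gg_spec a q.1
  have s4 := gg_spec a q.2
  have h' : ¬ ((p.1 < q.1 ∧ q.1 < p.2 ∧ p.2 < q.2) ∨ (q.1 < p.1 ∧ p.1 < q.2 ∧ q.2 < p.2)) := h
  intro hc
  have hc' : (gg a p.1 < gg a q.1 ∧ gg a q.1 < gg a p.2 ∧ gg a p.2 < gg a q.2) ∨
      (gg a q.1 < gg a p.1 ∧ gg a p.1 < gg a q.2 ∧ gg a q.2 < gg a p.2) := hc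
  omega

lemma inj_img (hG : ∀ p ∈ F, Good N p) (hC : ∀ p ∈ F, ∀ q ∈ F, ¬ Cross p q)
    (hI : I ∈ F) (hmin : ∀ p ∈ F, I.2 - I.1 ≤ p.2 - p.1) :
    ∀ p ∈ F, ∀ q ∈ F, (gg I.1 p.1, gg I.1 p.2) = (gg I.1 q.1, gg I.1 q.2) → p = q := by
  intro p hp q hq h
  have e1 : gg I.1 p.1 = gg I.1 q.1 := congrArg Prod.fst h
  have e2 : gg I.1 p.2 = gg I.1 q.2 := congrArg Prod.snd h
  have h1 := hend_lemma hG hC hI hmin p hp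
  have h2 := hend_lemma hG hC hI hmin q hq
  have s1 := gg_spec I.1 p.1
  have s2 := gg_spec I.1 p.2
  have s3 := gg_spec I.1 q.1
  have s4 := gg_spec I.1 q.2
  have : p.1 = q.1 ∧ p.2 = q.2 := by omega
  exact Prod.ext this.1 this.2

end Step

theorem cardA : ∀ N : ℕ, ∀ F : Finset (ℕ × ℕ),
    (∀ p ∈ F, Good N p) → (∀ p ∈ F, ∀ q ∈ F, ¬ Cross p q) → F.card ≤ N - 2 := by
  intro N
  induction N using Nat.strong_induction_on with
  | _ N IH =>
    intro F hG hC
    rcases F.eq_empty_or_nonempty with rfl | hne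
    · simp
    obtain ⟨I, hI, hmin'⟩ := F.exists_min_image (fun p => p.2 - p.1) hne
    have hmin : ∀ p ∈ F, I.2 - I.1 ≤ p.2 - p.1 := hmin'
    obtain ⟨hI2, hIN, hI0⟩ := hG I hI
    have hN2 : 2 ≤ N := by omega
    set G : ℕ × ℕ → ℕ × ℕ := fun p => (gg I.1 p.1, gg I.1 p.2) with hGdef
    by_cases hb2 : I.2 = I.1 + 2
    · have hsub : F.erase I ⊆ F := Finset.erase_subset I F
      have hinj : Set.InjOn G (F.erase I) := fun p hp q hq h =>
        inj_img hG hC hI hmin p (hsub hp) q (hsub hq) h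
      have hcard : ((F.erase I).image G).card = F.card - 1 := by
        rw [Finset.card_image_of_injOn hinj, Finset.card_erase_of_mem hI]
      have hgood' : ∀ p' ∈ (F.erase I).image G, Good (N - 1) p' := by
        intro p' hp'
        obtain ⟨p, hp, rfl⟩ := Finset.mem_image.mp hp'
        exact good_img hG hC hI hmin p (hsub hp)
          (fun hpI => absurd hpI (Finset.ne_of_mem_erase hp))
      have hcross' : ∀ p' ∈ (F.erase I).image G, ∀ q' ∈ (F.erase I).image G, ¬ Cross p' q' := by
        intro p' hp' q' hq'
        obtain ⟨p, hp, rfl⟩ := Finset.mem_image.mp hp'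
        obtain ⟨q, hq, rfl⟩ := Finset.mem_image.mp hq'
        exact cross_img p q (hC p (hsub hp) q (hsub hq))
      have hle := IH (N - 1) (by omega) ((F.erase I).image G) hgood' hcross'
      have hFpos : 0 < F.card := Finset.card_pos.mpr hne
      omega
    · have hinj : Set.InjOn G F := fun p hp q hq h => inj_img hG hC hI hmin p hp q hq h
      have hcard : (F.image G).card = F.card := Finset.card_image_of_injOn hinj
      have hgood' : ∀ p' ∈ F.image G, Good (N - 1) p' := by
        intro p' hp'
        obtain ⟨p, hp, rfl⟩ := Finset.mem_image.mp hp'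
        exact good_img hG hC hI hmin p hp (fun _ => by omega)
      have hcross' : ∀ p' ∈ F.image G, ∀ q' ∈ F.image G, ¬ Cross p' q' := by
        intro p' hp' q' hq'
        obtain ⟨p, hp, rfl⟩ := Finset.mem_image.mp hp'
        obtain ⟨q, hq, rfl⟩ := Finset.mem_image.mp hq'
        exact cross_img p q (hC p hp q hq)
      have hle := IH (N - 1) (by omega) (F.image G) hgood' hcross'
      omega


theorem extendB : ∀ N : ℕ, ∀ F : Finset (ℕ × ℕ),
    (∀ p ∈ F, Good N p) → (∀ p ∈ F, ∀ q ∈ F, ¬ Cross p q) → F.card < N - 2 →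
    ∃ r, Good N r ∧ r ∉ F ∧ ∀ p ∈ F, ¬ Cross p r := by
  intro N
  induction N using Nat.strong_induction_on with
  | _ N IH =>
    intro F hG hC hlt
    have hN : 3 ≤ N := by omega
    rcases F.eq_empty_or_nonempty with rfl | hne
    · refine ⟨(0, 2), ?_, by simp, by simp⟩
      show (0 : ℕ) + 2 ≤ 2 ∧ 2 ≤ N ∧ ¬((0 : ℕ) = 0 ∧ 2 = N)
      omega
    obtain ⟨I, hI, hmin'⟩ := F.exists_min_image (fun p => p.2 - p.1) hne
    have hmin : ∀ p ∈ F, I.2 - I.1 ≤ p.2 - p.1 := hmin'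
    obtain ⟨hI2, hIN, hI0⟩ := hG I hI
    by_cases hb2 : I.2 = I.1 + 2
    · -- contract the minimal ear and recurse
      set G : ℕ × ℕ → ℕ × ℕ := fun p => (gg I.1 p.1, gg I.1 p.2) with hGdef
      have hsub : F.erase I ⊆ F := Finset.erase_subset I F
      have hinj : Set.InjOn G (F.erase I) := fun p hp q hq h =>
        inj_img hG hC hI hmin p (hsub hp) q (hsub hq) h
      have hcard : ((F.erase I).image G).card = F.card - 1 := by
        rw [Finset.card_image_of_injOn hinj, Finset.card_erase_of_mem hI]
      have hgood' : ∀ p' ∈ (F.erase I).image G, Good (N - 1) p' := by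
        intro p' hp'
        obtain ⟨p, hp, rfl⟩ := Finset.mem_image.mp hp'
        exact good_img hG hC hI hmin p (hsub hp)
          (fun hpI => absurd hpI (Finset.ne_of_mem_erase hp))
      have hcross' : ∀ p' ∈ (F.erase I).image G, ∀ q' ∈ (F.erase I).image G, ¬ Cross p' q' := by
        intro p' hp' q' hq'
        obtain ⟨p, hp, rfl⟩ := Finset.mem_image.mp hp'
        obtain ⟨q, hq, rfl⟩ := Finset.mem_image.mp hq'
        exact cross_img p q (hC p (hsub hp) q (hsub hq))
      have hFpos : 0 < F.card := Finset.card_pos.mpr hne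
      have hlt' : ((F.erase I).image G).card < (N - 1) - 2 := by omega
      obtain ⟨r, hGr, hrF, hrC⟩ := IH (N - 1) (by omega) _ hgood' hcross' hlt'
      obtain ⟨r1, r2⟩ := r
      obtain ⟨hr1, hr2, hr3⟩ := hGr
      simp only at hr1 hr2 hr3
      have t1 := hh_spec I.1 r1
      have t2 := hh_spec I.1 r2
      have u1 := gg_spec I.1 (hh I.1 r1)
      have u2 := gg_spec I.1 (hh I.1 r2)
      have gh1 : gg I.1 (hh I.1 r1) = r1 := by omega
      have gh2 : gg I.1 (hh I.1 r2) = r2 := by omega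
      refine ⟨(hh I.1 r1, hh I.1 r2), ?_, ?_, ?_⟩
      · show hh I.1 r1 + 2 ≤ hh I.1 r2 ∧ hh I.1 r2 ≤ N ∧ ¬(hh I.1 r1 = 0 ∧ hh I.1 r2 = N)
        omega
      · intro hmem
        by_cases hqI : (hh I.1 r1, hh I.1 r2) = I
        · have e1 : hh I.1 r1 = I.1 := congrArg Prod.fst hqI
          have e2 : hh I.1 r2 = I.2 := congrArg Prod.snd hqI
          omega
        · have hmem' : (hh I.1 r1, hh I.1 r2) ∈ F.erase I := Finset.mem_erase.mpr ⟨hqI, hmem⟩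
          have hin : G (hh I.1 r1, hh I.1 r2) ∈ (F.erase I).image G :=
            Finset.mem_image_of_mem G hmem'
          have hGh : G (hh I.1 r1, hh I.1 r2) = (r1, r2) := by
            show (gg I.1 (hh I.1 r1), gg I.1 (hh I.1 r2)) = (r1, r2)
            rw [gh1, gh2]
          rw [hGh] at hin
          exact hrF hin
      · intro p hp hc
        have hc' : (p.1 < hh I.1 r1 ∧ hh I.1 r1 < p.2 ∧ p.2 < hh I.1 r2) ∨
            (hh I.1 r1 < p.1 ∧ p.1 < hh I.1 r2 ∧ hh I.1 r2 < p.2) := hc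
        by_cases hpI : p = I
        · subst hpI; omega
        · have hGp : G p ∈ (F.erase I).image G :=
            Finset.mem_image_of_mem G (Finset.mem_erase.mpr ⟨hpI, hp⟩)
          have hend := hend_lemma hG hC hI hmin p hp
          have s1 := gg_spec I.1 p.1
          have s2 := gg_spec I.1 p.2
          refine hrC (G p) hGp ?_
          show (gg I.1 p.1 < r1 ∧ r1 < gg I.1 p.2 ∧ gg I.1 p.2 < r2) ∨
            (r1 < gg I.1 p.1 ∧ gg I.1 p.1 < r2 ∧ r2 < gg I.1 p.2)
          omega
    · -- minimal diagonal is long: split off an ear inside it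
      have hIN2 : I.1 + 2 < I.2 := by omega
      refine ⟨(I.1, I.1 + 2), ?_, ?_, ?_⟩
      · show I.1 + 2 ≤ I.1 + 2 ∧ I.1 + 2 ≤ N ∧ ¬(I.1 = 0 ∧ I.1 + 2 = N)
        omega
      · intro hmem
        have h2 : I.2 - I.1 ≤ (I.1 + 2) - I.1 := hmin _ hmem
        omega
      · intro p hp hc
        have hc' : (p.1 < I.1 ∧ I.1 < p.2 ∧ p.2 < I.1 + 2) ∨
            (I.1 < p.1 ∧ p.1 < I.1 + 2 ∧ I.1 + 2 < p.2) := hc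
        by_cases hpI : p = I
        · subst hpI; omega
        · have hu := hub_lemma hG hC hI hmin p hp hpI
          omega

theorem extendTo (N : ℕ) : ∀ (k : ℕ) (F : Finset (ℕ × ℕ)),
    (∀ p ∈ F, Good N p) → (∀ p ∈ F, ∀ q ∈ F, ¬ Cross p q) → F.card + k = N - 2 →
    ∃ F' : Finset (ℕ × ℕ), F ⊆ F' ∧ F'.card = N - 2 ∧ (∀ p ∈ F', Good N p) ∧
      (∀ p ∈ F', ∀ q ∈ F', ¬ Cross p q) := by
  intro k
  induction k with
  | zero =>
    intro F hG hC h
    exact ⟨F, Finset.Subset.refl F, by omega, hG, hC⟩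
  | succ k ih =>
    intro F hG hC h
    obtain ⟨r, hr, hrF, hrC⟩ := extendB N F hG hC (by omega)
    have hGi : ∀ p ∈ insert r F, Good N p := by
      intro p hp
      rcases Finset.mem_insert.mp hp with rfl | hp
      · exact hr
      · exact hG p hp
    have hCi : ∀ p ∈ insert r F, ∀ q ∈ insert r F, ¬ Cross p q := by
      intro p hp q hq
      rcases Finset.mem_insert.mp hp with rfl | hp' <;>
        rcases Finset.mem_insert.mp hq with rfl | hq'
      · exact Cross_irrefl _
      · intro hc; exact hrC q hq' hc.symm
      · exact hrC p hp'
      · exact hC p hp' q hq'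
    obtain ⟨F', hsub, hcard, hG', hC'⟩ := ih (insert r F) hGi hCi
      (by rw [Finset.card_insert_of_notMem hrF]; omega)
    exact ⟨F', (Finset.subset_insert r F).trans hsub, hcard, hG', hC'⟩

-- pair set equality
lemma pair_eq_pair {α : Type*} [DecidableEq α] {x y z w : α}
    (h : ({x, y} : Finset α) = {z, w}) : (x = z ∧ y = w) ∨ (x = w ∧ y = z) := by
  have hx : x = z ∨ x = w := by
    have hm : x ∈ ({z, w} : Finset α) := by rw [← h]; simp
    simpa using hm
  have hy : y = z ∨ y = w := by
    have hm : y ∈ ({z, w} : Finset α) := by rw [← h]; simp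
    simpa using hm
  have hz : z = x ∨ z = y := by
    have hm : z ∈ ({x, y} : Finset α) := by rw [h]; simp
    simpa using hm
  have hw : w = x ∨ w = y := by
    have hm : w ∈ ({x, y} : Finset α) := by rw [h]; simp
    simpa using hm
  rcases hx with rfl | rfl <;> rcases hy with rfl | rfl <;> tauto

def toPair {m : ℕ} (e : Finset (Fin m)) : ℕ × ℕ :=
  if h : e.Nonempty then ((e.min' h).val, (e.max' h).val) else (0, 0)

lemma toPair_pair {m : ℕ} {a b : Fin m} (hab : a.val < b.val) :
    toPair {a, b} = (a.val, b.val) := by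
  have hne : ({a, b} : Finset (Fin m)).Nonempty := ⟨a, Finset.mem_insert_self a {b}⟩
  have hle : a ≤ b := by rw [Fin.le_def]; omega
  have hmin : ({a, b} : Finset (Fin m)).min' hne = a := by
    refine le_antisymm (Finset.min'_le _ a (Finset.mem_insert_self a {b})) ?_
    refine Finset.le_min' _ _ _ ?_
    intro y hy
    rcases Finset.mem_insert.mp hy with rfl | hy
    · exact le_refl _
    · rw [Finset.mem_singleton] at hy; subst hy; exact hle
  have hmax : ({a, b} : Finset (Fin m)).max' hne = b := by
    refine le_antisymm ?_ (Finset.le_max' _ b (by simp))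
    refine Finset.max'_le _ _ _ ?_
    intro y hy
    rcases Finset.mem_insert.mp hy with rfl | hy
    · exact hle
    · rw [Finset.mem_singleton] at hy; subst hy; exact le_refl _
  unfold toPair
  rw [dif_pos hne, hmin, hmax]

def fromPair {m : ℕ} (hm : 0 < m) (q : ℕ × ℕ) : Finset (Fin m) :=
  {⟨q.1 % m, Nat.mod_lt _ hm⟩, ⟨q.2 % m, Nat.mod_lt _ hm⟩}

lemma sorted_canon {m : ℕ} {i j : Fin m} (hlt : i.val < j.val)
    (h1 : (i.val + 1) % m ≠ j.val) (h2 : (j.val + 1) % m ≠ i.val) :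
    i.val + 2 ≤ j.val ∧ ¬(i.val = 0 ∧ j.val = m - 1) := by
  have hj := j.isLt
  have e1 : (i.val + 1) % m = i.val + 1 := Nat.mod_eq_of_lt (by omega)
  constructor
  · omega
  · rintro ⟨h0, hm1⟩
    apply h2
    rw [hm1]
    have hmm : m - 1 + 1 = m := by omega
    rw [hmm, Nat.mod_self, h0]

lemma diag_canon {m : ℕ} {e : Finset (Fin m)} (h : isDiagPair m e) :
    ∃ a b : Fin m, a.val + 2 ≤ b.val ∧ ¬(a.val = 0 ∧ b.val = m - 1) ∧ e = {a, b} := by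
  obtain ⟨i, j, hij, hadj, rfl⟩ := h
  simp only [adjOnCycle] at hadj
  push_neg at hadj
  obtain ⟨h1, h2⟩ := hadj
  have hne : i.val ≠ j.val := fun hv => hij (Fin.ext hv)
  rcases Nat.lt_or_ge i.val j.val with hlt | hge
  · obtain ⟨c1, c2⟩ := sorted_canon hlt h1 h2
    exact ⟨i, j, c1, c2, rfl⟩
  · have hlt : j.val < i.val := by omega
    obtain ⟨c1, c2⟩ := sorted_canon hlt h2 h1
    exact ⟨j, i, c1, c2, Finset.pair_comm i j⟩

lemma diag_good {m : ℕ} {e : Finset (Fin m)} (h : isDiagPair m e) :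
    Good (m - 1) (toPair e) := by
  obtain ⟨a, b, hab, h0, rfl⟩ := diag_canon h
  rw [toPair_pair (by omega)]
  have hb := b.isLt
  exact ⟨hab, by omega, h0⟩

lemma fromPair_spec {m : ℕ} (hm : 0 < m) {q : ℕ × ℕ} (hq : Good (m - 1) q) :
    isDiagPair m (fromPair hm q) ∧ toPair (fromPair hm q) = q := by
  obtain ⟨h1, h2, h3⟩ := hq
  have hq1 : q.1 < m := by omega
  have hq2 : q.2 < m := by omega
  have ea : (⟨q.1 % m, Nat.mod_lt _ hm⟩ : Fin m) = ⟨q.1, hq1⟩ := Fin.ext (Nat.mod_eq_of_lt hq1)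
  have eb : (⟨q.2 % m, Nat.mod_lt _ hm⟩ : Fin m) = ⟨q.2, hq2⟩ := Fin.ext (Nat.mod_eq_of_lt hq2)
  have hfp : fromPair hm q = {(⟨q.1, hq1⟩ : Fin m), ⟨q.2, hq2⟩} := by
    unfold fromPair; rw [ea, eb]
  constructor
  · refine ⟨⟨q.1, hq1⟩, ⟨q.2, hq2⟩, ?_, ?_, hfp⟩
    · intro hcc
      have := congrArg Fin.val hcc
      simp only at this
      omega
    · intro hadj
      rcases hadj with hA | hA
    
      · have e1 : (q.1 + 1) % m = q.1 + 1 := Nat.mod_eq_of_lt (by omega)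
        simp only at hA
        omega
      · simp only at hA
        rcases Nat.lt_or_ge (q.2 + 1) m with hl | hl
        · have e1 : (q.2 + 1) % m = q.2 + 1 := Nat.mod_eq_of_lt hl
          omega
        · have hq2m : q.2 = m - 1 := by omega
          have e1 : (q.2 + 1) % m = 0 := by
            have : q.2 + 1 = m := by omega
            rw [this, Nat.mod_self]
          omega
  · rw [hfp, toPair_pair (by simp; omega)]

lemma fromPair_toPair {m : ℕ} (hm : 0 < m) {e : Finset (Fin m)} (h : isDiagPair m e) :
    fromPair hm (toPair e) = e := by
  obtain ⟨a, b, hab, h0, rfl⟩ := diag_canon h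
  rw [toPair_pair (by omega)]
  have ha := a.isLt
  have hb := b.isLt
  unfold fromPair
  congr 1
  · exact Fin.ext (by simp [Nat.mod_eq_of_lt ha])
  · congr 1
    exact Fin.ext (by simp [Nat.mod_eq_of_lt hb])

lemma cross_from {m : ℕ} {e f : Finset (Fin m)} (h : crossing m e f) :
    Cross (toPair e) (toPair f) := by
  obtain ⟨a, b, c, d, rfl, rfl, h1, h2, h3⟩ := h
  rw [toPair_pair (by omega), toPair_pair (by omega)]
  exact Or.inl ⟨h1, h2, h3⟩

lemma cross_to {m : ℕ} {e f : Finset (Fin m)} (he : isDiagPair m e) (hf : isDiagPair m f)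
    (h : Cross (toPair e) (toPair f)) : crossing m e f ∨ crossing m f e := by
  obtain ⟨a, b, hab, -, rfl⟩ := diag_canon he
  obtain ⟨c, d, hcd, -, rfl⟩ := diag_canon hf
  rw [toPair_pair (by omega), toPair_pair (by omega)] at h
  rcases h with ⟨h1, h2, h3⟩ | ⟨h1, h2, h3⟩
  · exact Or.inl ⟨a, b, c, d, rfl, rfl, h1, h2, h3⟩
  · exact Or.inr ⟨c, d, a, b, rfl, rfl, h1, h2, h3⟩


section Contract

variable (n : ℕ) (hn : 4 ≤ n) (i : Fin n)

lemma fspec1 (hi : i.val < n - 1) (x : Fin n) :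
    (x.val ≤ i.val ∧ (contractMap n hn i x).val = x.val) ∨
    (i.val < x.val ∧ (contractMap n hn i x).val = x.val - 1) := by
  have hx := x.isLt
  have hval : (contractMap n hn i x).val =
      (if x.val ≤ i.val then x.val else x.val - 1) % (n - 1) := rfl
  rw [hval]
  split_ifs with h
  · exact Or.inl ⟨h, Nat.mod_eq_of_lt (by omega)⟩
  · exact Or.inr ⟨by omega, Nat.mod_eq_of_lt (by omega)⟩

lemma fspec2 (hi : i.val = n - 1) (x : Fin n) :
    (x.val < n - 1 ∧ (contractMap n hn i x).val = x.val) ∨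
    (x.val = n - 1 ∧ (contractMap n hn i x).val = 0) := by
  have hx := x.isLt
  have hval : (contractMap n hn i x).val =
      (if x.val ≤ i.val then x.val else x.val - 1) % (n - 1) := rfl
  rw [hval, if_pos (by omega)]
  rcases Nat.lt_or_ge x.val (n - 1) with h | h
  · exact Or.inl ⟨h, Nat.mod_eq_of_lt h⟩
  · have hx1 : x.val = n - 1 := by omega
    refine Or.inr ⟨hx1, ?_⟩
    rw [hx1, Nat.mod_self]

lemma adj_helper {m : ℕ} (x y : Fin m) (h : y.val = x.val + 1 ∨ (x.val = m - 1 ∧ y.val = 0)) :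
    adjOnCycle m x y := by
  have hy := y.isLt
  have hx := x.isLt
  rcases h with h | ⟨h1, h2⟩
  · left
    rw [Nat.mod_eq_of_lt (by omega)]
    exact h.symm
  · left
    rw [h2]
    have hxm : x.val + 1 = m := by omega
    rw [hxm, Nat.mod_self]

lemma bImg_core {p q : Fin n} (hadj1 : (p.val + 1) % n = q.val)
    (hne' : contractMap n hn i p ≠ contractMap n hn i q) :
    isBoundaryEdge (n - 1) {contractMap n hn i p, contractMap n hn i q} := by
  refine ⟨_, _, hne', ?_, rfl⟩
  apply adj_helper
  have hp := p.isLt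
  have hq := q.isLt
  have hi := i.isLt
  have hvne : (contractMap n hn i p).val ≠ (contractMap n hn i q).val :=
    fun h => hne' (Fin.ext h)
  have hq' : (p.val < n - 1 ∧ q.val = p.val + 1) ∨ (p.val = n - 1 ∧ q.val = 0) := by
    rcases Nat.lt_or_ge p.val (n - 1) with h | h
    · left
      refine ⟨h, ?_⟩
      rw [← hadj1, Nat.mod_eq_of_lt (by omega)]
    · right
      have hp1 : p.val = n - 1 := by omega
      refine ⟨hp1, ?_⟩
      rw [← hadj1, hp1]
      have hmm : n - 1 + 1 = n := by omega
      rw [hmm, Nat.mod_self]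
  rcases Nat.lt_or_ge i.val (n - 1) with hic | hic
  · have s1 := fspec1 n hn i hic p
    have s2 := fspec1 n hn i hic q
    omega
  · have hii : i.val = n - 1 := by omega
    have s1 := fspec2 n hn i hii p
    have s2 := fspec2 n hn i hii q
    omega

lemma bImg {u v : Fin n} (h : isBoundaryEdge n {u, v})
    (hne : contractMap n hn i u ≠ contractMap n hn i v) :
    isBoundaryEdge (n - 1) {contractMap n hn i u, contractMap n hn i v} := by
  obtain ⟨p, q, hpq, hadj, heq⟩ := h
  have himg : ({contractMap n hn i u, contractMap n hn i v} : Finset (Fin (n - 1)))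
      = {contractMap n hn i p, contractMap n hn i q} ∧
      contractMap n hn i p ≠ contractMap n hn i q := by
    rcases pair_eq_pair heq with ⟨rfl, rfl⟩ | ⟨rfl, rfl⟩
    · exact ⟨rfl, hne⟩
    · exact ⟨Finset.pair_comm _ _, hne.symm⟩
  rw [himg.1]
  rcases hadj with h1 | h1
  · exact bImg_core n hn i h1 himg.2
  · rw [Finset.pair_comm]
    exact bImg_core n hn i h1 himg.2.symm

lemma pull {e f : Finset (Fin n)} (he : isDiagPair n e) (hf : isDiagPair n f)
    (h : crossing (n - 1) (e.image (contractMap n hn i)) (f.image (contractMap n hn i))) :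
    crossing n e f ∨ crossing n f e := by
  obtain ⟨u, v, huv, -, rfl⟩ := diag_canon he
  obtain ⟨x, y, hxy, -, rfl⟩ := diag_canon hf
  obtain ⟨a', b', c', d', hE, hF, h1, h2, h3⟩ := h
  rw [Finset.image_insert, Finset.image_singleton] at hE hF
  have l1 : ((contractMap n hn i u).val = a'.val ∧ (contractMap n hn i v).val = b'.val) ∨
      ((contractMap n hn i u).val = b'.val ∧ (contractMap n hn i v).val = a'.val) := by
    rcases pair_eq_pair hE with ⟨e1, e2⟩ | ⟨e1, e2⟩
    · exact Or.inl ⟨congrArg Fin.val e1, congrArg Fin.val e2⟩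
    · exact Or.inr ⟨congrArg Fin.val e1, congrArg Fin.val e2⟩
  have l2 : ((contractMap n hn i x).val = c'.val ∧ (contractMap n hn i y).val = d'.val) ∨
      ((contractMap n hn i x).val = d'.val ∧ (contractMap n hn i y).val = c'.val) := by
    rcases pair_eq_pair hF with ⟨e1, e2⟩ | ⟨e1, e2⟩
    · exact Or.inl ⟨congrArg Fin.val e1, congrArg Fin.val e2⟩
    · exact Or.inr ⟨congrArg Fin.val e1, congrArg Fin.val e2⟩
  have key : (u.val < x.val ∧ x.val < v.val ∧ v.val < y.val) ∨
      (x.val < u.val ∧ u.val < y.val ∧ y.val < v.val) := by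
    rcases Nat.lt_or_ge i.val (n - 1) with hic | hic
    · have s1 := fspec1 n hn i hic u
      have s2 := fspec1 n hn i hic v
      have s3 := fspec1 n hn i hic x
      have s4 := fspec1 n hn i hic y
      omega
    · have hii : i.val = n - 1 := by omega
      have s1 := fspec2 n hn i hii u
      have s2 := fspec2 n hn i hii v
      have s3 := fspec2 n hn i hii x
      have s4 := fspec2 n hn i hii y
      omega
  rcases key with ⟨k1, k2, k3⟩ | ⟨k1, k2, k3⟩
  · exact Or.inl ⟨u, v, x, y, rfl, rfl, k1, k2, k3⟩
  · exact Or.inr ⟨x, y, u, v, rfl, rfl, k1, k2, k3⟩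

end Contract

end ContractAux

open ContractAux in
/-- contracting a boundary edge of a triangulation graph of a
polygon with `n ≥ 4` vertices yields a triangulation graph of a polygon with
`n - 1` vertices (every edge of `T` survives as an edge of the contraction). -/
theorem contract_boundary_edge (n : ℕ) (hn : 4 ≤ n) (T : PolyTriangulation n)
    (i : Fin n) :
    ∃ T' : PolyTriangulation (n - 1),
      ∀ u v : Fin n, T.isEdge {u, v} →
        contractMap n hn i u ≠ contractMap n hn i v →
        T'.isEdge {contractMap n hn i u, contractMap n hn i v} := by
  classical
  set m : ℕ := n - 1 with hm
  have hm0 : 0 < m := by omega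
  set fm : Fin n → Fin m := contractMap n hn i with hfm
  set S : Finset (Finset (Fin m)) :=
    (T.diags.image (fun e => e.image fm)).filter (fun e' => isDiagPair m e') with hS
  have hSdiag : ∀ e' ∈ S, isDiagPair m e' := by
    intro e' he'
    exact (Finset.mem_filter.mp he').2
  have hSpre : ∀ e' ∈ S, ∃ e ∈ T.diags, e' = e.image fm := by
    intro e' he'
    obtain ⟨e, he, heq⟩ := Finset.mem_image.mp (Finset.mem_filter.mp he').1
    exact ⟨e, he, heq.symm⟩
  set F0 : Finset (ℕ × ℕ) := S.image toPair with hF0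
  have hGood0 : ∀ p ∈ F0, Good (m - 1) p := by
    intro p hp
    obtain ⟨e', he', rfl⟩ := Finset.mem_image.mp hp
    exact diag_good (hSdiag e' he')
  have hCross0 : ∀ p ∈ F0, ∀ q ∈ F0, ¬ Cross p q := by
    intro p hp q hq hc
    obtain ⟨e', he', rfl⟩ := Finset.mem_image.mp hp
    obtain ⟨f', hf', rfl⟩ := Finset.mem_image.mp hq
    obtain ⟨e, he, rfl⟩ := hSpre e' he'
    obtain ⟨f, hf, rfl⟩ := hSpre f' hf'
    have hde := T.diags_valid e he
    have hdf := T.diags_valid f hf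
    rcases cross_to (hSdiag _ he') (hSdiag _ hf') hc with hcr | hcr
    · rcases pull n hn i hde hdf hcr with h | h
      · exact T.noncrossing e he f hf h
      · exact T.noncrossing f hf e he h
    · rcases pull n hn i hdf hde hcr with h | h
      · exact T.noncrossing f hf e he h
      · exact T.noncrossing e he f hf h
  have hcard0 : F0.card ≤ (m - 1) - 2 := cardA (m - 1) F0 hGood0 hCross0
  obtain ⟨F', hsub, hcardF', hGoodF', hCrossF'⟩ :=
    extendTo (m - 1) ((m - 1) - 2 - F0.card) F0 hGood0 hCross0 (by omega)
  refine ⟨⟨F'.image (fromPair hm0), ?_, ?_, ?_⟩, ?_⟩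
  · intro e' he'
    obtain ⟨q, hq, rfl⟩ := Finset.mem_image.mp he'
    exact (fromPair_spec hm0 (hGoodF' q hq)).1
  · intro e' he' f' hf' hc
    obtain ⟨q1, hq1, rfl⟩ := Finset.mem_image.mp he'
    obtain ⟨q2, hq2, rfl⟩ := Finset.mem_image.mp hf'
    have hcc := cross_from hc
    rw [(fromPair_spec hm0 (hGoodF' q1 hq1)).2, (fromPair_spec hm0 (hGoodF' q2 hq2)).2] at hcc
    exact hCrossF' q1 hq1 q2 hq2 hcc
  · rw [Finset.card_image_of_injOn]
    · omega
    · intro q1 hq1 q2 hq2 heq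
      have := congrArg toPair heq
      rwa [(fromPair_spec hm0 (hGoodF' q1 hq1)).2, (fromPair_spec hm0 (hGoodF' q2 hq2)).2] at this
  · intro u v hedge hne
    rcases hedge with hb | hd
    · exact Or.inl (bImg n hn i hb hne)
    · by_cases hadj : adjOnCycle m (fm u) (fm v)
      · exact Or.inl ⟨fm u, fm v, hne, hadj, rfl⟩
      · right
        have hdp : isDiagPair m {fm u, fm v} := ⟨fm u, fm v, hne, hadj, rfl⟩
        have himg : ({u, v} : Finset (Fin n)).image fm = {fm u, fm v} := by
          rw [Finset.image_insert, Finset.image_singleton]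
        have hmem : ({fm u, fm v} : Finset (Fin m)) ∈ S :=
          Finset.mem_filter.mpr ⟨Finset.mem_image.mpr ⟨{u, v}, hd, himg⟩, hdp⟩
        have hmem2 : toPair ({fm u, fm v} : Finset (Fin m)) ∈ F' :=
          hsub (Finset.mem_image_of_mem toPair hmem)
        have hmem3 : fromPair hm0 (toPair ({fm u, fm v} : Finset (Fin m)))
            ∈ F'.image (fromPair hm0) := Finset.mem_image_of_mem _ hmem2
        rwa [fromPair_toPair hm0 hdp] at hmem3
end

section
/- For every m ≥ 1 there exist triangulation graphs with n = 5m, 5m+1, 5m+3, and 5m+4 vertices each of whose edge 2-dominating sets has size at least ⌊(2n+1)/5⌋. -/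
open Finset

namespace ETD
open Fin.NatCast
variable {n : ℕ}

lemma valc [NeZero n] {a : ℕ} (h : a < n) : ((a : Fin n)).val = a := by
  simp [Fin.val_natCast, Nat.mod_eq_of_lt h]

lemma cast_injv [NeZero n] {a b : ℕ} (ha : a < n) (hb : b < n) (h : (a : Fin n) = (b : Fin n)) :
    a = b := by
  have := congrArg Fin.val h; rwa [valc ha, valc hb] at this

lemma mem_pair_val [NeZero n] {a b : ℕ} {x : Fin n} (ha : a < n) (hb : b < n)
    (hx : x ∈ ({(a : Fin n), (b : Fin n)} : Finset (Fin n))) : x.val = a ∨ x.val = b := by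
  rcases Finset.mem_insert.mp hx with h | h
  · left; rw [h, valc ha]
  · right; rw [Finset.mem_singleton.mp h, valc hb]

lemma bnd_normal [NeZero n] {e : Finset (Fin n)} (he : isBoundaryEdge n e) :
    ∃ a : ℕ, a < n ∧ e = {(a : Fin n), (((a + 1) % n : ℕ) : Fin n)} := by
  obtain ⟨i, j, hij, hadj, rfl⟩ := he
  rcases hadj with h | h
  · refine ⟨i.val, i.isLt, ?_⟩
    have h2 : (((i.val + 1) % n : ℕ) : Fin n) = j := by
      apply Fin.ext
      rw [valc (Nat.mod_lt _ (Nat.pos_of_ne_zero (NeZero.ne n))), h]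
    rw [h2, Fin.cast_val_eq_self]
  · refine ⟨j.val, j.isLt, ?_⟩
    have h2 : (((j.val + 1) % n : ℕ) : Fin n) = i := by
      apply Fin.ext
      rw [valc (Nat.mod_lt _ (Nat.pos_of_ne_zero (NeZero.ne n))), h]
    rw [h2, Fin.cast_val_eq_self, Finset.pair_comm]

/-- block index of a boundary edge -/
def idxE (n : ℕ) [NeZero n] (e : Finset (Fin n)) : ℕ :=
  if (0 : Fin n) ∈ e ∧ (((n - 1 : ℕ)) : Fin n) ∈ e then (n - 1) / 5
  else (e.sup (fun v => v.val) - 1) / 5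

lemma idxE_eq [NeZero n] (hn : 5 ≤ n) {a : ℕ} (ha : a < n) :
    idxE n {(a : Fin n), (((a + 1) % n : ℕ) : Fin n)} = a / 5 := by
  rcases Nat.lt_or_ge a (n-1) with h | h
  · have hb : (a+1) % n = a + 1 := Nat.mod_eq_of_lt (by omega)
    rw [hb]
    unfold idxE
    rw [if_neg, Finset.sup_insert, Finset.sup_singleton, valc ha, valc (by omega)]
    · have : a ⊔ (a+1) = a + 1 := by simp
      rw [this]; omega
    · rintro ⟨h0, h1⟩
      have h2 := mem_pair_val ha (by omega) h0
      have h3 := mem_pair_val ha (by omega) h1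
      rw [valc (show n-1 < n by omega)] at h3
      simp only [Fin.val_zero] at h2
      omega
  · have ha' : a = n - 1 := by omega
    have hb : (a+1) % n = 0 := by rw [ha']; simp [Nat.sub_add_cancel (by omega : 1 ≤ n)]
    rw [hb]
    unfold idxE
    rw [if_pos]
    · omega
    · constructor
      · rw [show ((0:ℕ) : Fin n) = (0 : Fin n) by simp]
        exact Finset.mem_insert.mpr (Or.inr (Finset.mem_singleton_self _))
      · rw [← ha']; exact Finset.mem_insert_self _ _
  
lemma idx_le [NeZero n] (hn : 5 ≤ n) {e : Finset (Fin n)} (he : isBoundaryEdge n e) :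
    idxE n e ≤ (n - 1) / 5 := by
  obtain ⟨a, ha, rfl⟩ := bnd_normal he
  rw [idxE_eq hn ha]
  exact Nat.div_le_div_right (by omega)

lemma cov_idx [NeZero n] (hn : 5 ≤ n) {e : Finset (Fin n)} (he : isBoundaryEdge n e)
    {v : Fin n} (hv : v ∈ e) (h1 : 1 ≤ v.val) :
    idxE n e = (v.val - 1) / 5 ∨ idxE n e = v.val / 5 := by
  obtain ⟨a, ha, rfl⟩ := bnd_normal he
  rw [idxE_eq hn ha]
  have hb : (a+1) % n < n := Nat.mod_lt _ (by omega)
  have := mem_pair_val ha hb hv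
  rcases Nat.lt_or_ge a (n-1) with h | h
  · rw [Nat.mod_eq_of_lt (by omega : a + 1 < n)] at this
    omega
  · have ha' : a = n - 1 := by omega
    rw [ha'] at this ⊢
    rw [show (n-1+1) % n = 0 by simp [Nat.sub_add_cancel (by omega : 1 ≤ n)]] at this
    omega

lemma not_same_edge [NeZero n] (hn : 5 ≤ n) {e : Finset (Fin n)} (he : isBoundaryEdge n e)
    {x y : Fin n} (hx : x ∈ e) (hy : y ∈ e) (h1 : 1 ≤ x.val) (hg : x.val + 2 ≤ y.val) : False := by
  obtain ⟨a, ha, rfl⟩ := bnd_normal he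
  have hb : (a+1) % n < n := Nat.mod_lt _ (by omega)
  have h2 := mem_pair_val ha hb hx
  have h3 := mem_pair_val ha hb hy
  rcases Nat.lt_or_ge a (n-1) with h | h
  · rw [Nat.mod_eq_of_lt (by omega : a + 1 < n)] at h2 h3; omega
  · have ha' : a = n - 1 := by omega
    rw [ha', show (n-1+1) % n = 0 by simp [Nat.sub_add_cancel (by omega : 1 ≤ n)]] at h2 h3
    omega

structure Scheme (n : ℕ) : Type where
  M : ℕ
  fst : ℕ → ℕ
  snd : ℕ → ℕ
  hM : M = n - 3
  h1 : ∀ i, i < M → fst i < snd i ∧ snd i < n ∧ snd i ≠ fst i + 1 ∧ ¬(fst i = 0 ∧ snd i = n - 1)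
  h2 : ∀ i, i < M → ∀ j, j < M → fst i = fst j → snd i = snd j → i = j
  h3 : ∀ i, i < M → ∀ j, j < M → ¬(fst i < fst j ∧ fst j < snd i ∧ snd i < snd j)

def Scheme.diagSet [NeZero n] (S : Scheme n) : Finset (Finset (Fin n)) :=
  (Finset.range S.M).image (fun i => {((S.fst i : ℕ) : Fin n), ((S.snd i : ℕ) : Fin n)})

lemma pair_vals [NeZero n] {a b : ℕ} {x y : Fin n} (hab : a < b) (hb : b < n)
    (hxy : x.val < y.val)
    (h : ({(a : Fin n), (b : Fin n)} : Finset (Fin n)) = {x, y}) : x.val = a ∧ y.val = b := by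
  have hx : x ∈ ({(a : Fin n), (b : Fin n)} : Finset (Fin n)) := by
    rw [h]; exact Finset.mem_insert_self _ _
  have hy : y ∈ ({(a : Fin n), (b : Fin n)} : Finset (Fin n)) := by
    rw [h]; exact Finset.mem_insert.mpr (Or.inr (Finset.mem_singleton_self _))
  have h1 := mem_pair_val (lt_trans hab hb) hb hx
  have h2 := mem_pair_val (lt_trans hab hb) hb hy
  omega

def Scheme.tri [NeZero n] (S : Scheme n) : PolyTriangulation n where
  diags := S.diagSet
  diags_valid := by
    intro e he
    obtain ⟨i, hi, rfl⟩ := Finset.mem_image.mp he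
    rw [Finset.mem_range] at hi
    obtain ⟨hfs, hsn, hne1, hne2⟩ := S.h1 i hi
    refine ⟨((S.fst i : ℕ) : Fin n), ((S.snd i : ℕ) : Fin n), ?_, ?_, rfl⟩
    · intro h
      have := congrArg Fin.val h
      rw [valc (by omega), valc hsn] at this; omega
    · intro h
      rcases h with h | h
      · rw [valc (show S.fst i < n by omega), valc hsn] at h
        rcases Nat.lt_or_ge (S.fst i + 1) n with h' | h'
        · rw [Nat.mod_eq_of_lt h'] at h; omega
        · omega
      · rw [valc hsn, valc (show S.fst i < n by omega)] at h
        rcases Nat.lt_or_ge (S.snd i + 1) n with h' | h'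
        · rw [Nat.mod_eq_of_lt h'] at h; omega
        · have : S.snd i = n - 1 := by omega
          rw [this] at h
          rw [show (n-1+1) % n = 0 by simp [Nat.sub_add_cancel (by omega : 1 ≤ n)]] at h
          omega
  noncrossing := by
    intro e he f hf hc
    obtain ⟨i, hi, rfl⟩ := Finset.mem_image.mp he
    obtain ⟨j, hj, rfl⟩ := Finset.mem_image.mp hf
    rw [Finset.mem_range] at hi hj
    obtain ⟨hfs, hsn, -, -⟩ := S.h1 i hi
    obtain ⟨hfs', hsn', -, -⟩ := S.h1 j hj
    obtain ⟨a, b, c, d, he1, hf1, l1, l2, l3⟩ := hc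
    obtain ⟨p1, p2⟩ := pair_vals hfs hsn (by omega) he1
    obtain ⟨q1, q2⟩ := pair_vals hfs' hsn' (by omega) hf1
    exact S.h3 i hi j hj (by omega)
  maximal := by
    have : S.diagSet.card = S.M := by
      rw [Scheme.diagSet, Finset.card_image_of_injOn, Finset.card_range]
      intro i hi j hj h
      simp only [Finset.coe_range, Set.mem_Iio] at hi hj
      dsimp only at h
      obtain ⟨hfs, hsn, -, -⟩ := S.h1 i hi
      obtain ⟨hfs', hsn', -, -⟩ := S.h1 j hj
      have hm1 : ((S.fst i : ℕ) : Fin n) ∈ ({((S.fst j : ℕ) : Fin n), ((S.snd j : ℕ) : Fin n)} : Finset (Fin n)) := by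
        rw [← h]; exact Finset.mem_insert_self _ _
      have hm2 : ((S.snd i : ℕ) : Fin n) ∈ ({((S.fst j : ℕ) : Fin n), ((S.snd j : ℕ) : Fin n)} : Finset (Fin n)) := by
        rw [← h]; exact Finset.mem_insert.mpr (Or.inr (Finset.mem_singleton_self _))
      have e1 := mem_pair_val (by omega) hsn' hm1
      have e2 := mem_pair_val (by omega) hsn' hm2
      rw [valc (by omega)] at e1
      rw [valc hsn] at e2
      exact S.h2 i hi j hj (by omega) (by omega)
    rw [this]; exact S.hM
  
lemma Scheme.mem_diags [NeZero n] (S : Scheme n) {a b : ℕ}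
    (h : ∃ i, i < S.M ∧ S.fst i = a ∧ S.snd i = b) :
    ({(a : Fin n), (b : Fin n)} : Finset (Fin n)) ∈ S.tri.diags := by
  obtain ⟨i, hi, h1, h2⟩ := h
  exact Finset.mem_image.mpr ⟨i, Finset.mem_range.mpr hi, by rw [h1, h2]⟩

lemma bedge [NeZero n] {a : ℕ} (h : a + 1 < n) :
    isBoundaryEdge n ({(a : Fin n), ((a + 1 : ℕ) : Fin n)} : Finset (Fin n)) := by
  refine ⟨_, _, ?_, Or.inl ?_, rfl⟩
  · intro hh
    have := congrArg Fin.val hh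
    rw [valc (by omega), valc h] at this; omega
  · rw [valc (by omega), valc h]
    exact Nat.mod_eq_of_lt h

lemma tri_ear [NeZero n] (T : PolyTriangulation n) {a : ℕ} (h2 : a + 2 < n)
    (hd : ({(a : Fin n), ((a + 2 : ℕ) : Fin n)} : Finset (Fin n)) ∈ T.diags) :
    T.isTriangle {(a : Fin n), ((a + 1 : ℕ) : Fin n), ((a + 2 : ℕ) : Fin n)} := by
  have v0 : ((a : Fin n)).val = a := valc (by omega)
  have v1 : (((a+1 : ℕ) : Fin n)).val = a + 1 := valc (by omega)
  have v2 : (((a+2 : ℕ) : Fin n)).val = a + 2 := valc (by omega)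
  refine ⟨_, _, _, ?_, ?_, ?_, rfl, Or.inl (bedge (by omega)), Or.inr hd, ?_⟩
  · intro hh; have := congrArg Fin.val hh; omega
  · intro hh; have := congrArg Fin.val hh; omega
  · intro hh; have := congrArg Fin.val hh; omega
  · have := bedge (n := n) (a := a + 1) (by omega)
    rw [show ((a+1)+1 : ℕ) = a + 2 by omega] at this
    exact Or.inl this

lemma tri_skew [NeZero n] (T : PolyTriangulation n) {a : ℕ} (h3 : a + 3 < n)
    (hd1 : ({(a : Fin n), ((a + 2 : ℕ) : Fin n)} : Finset (Fin n)) ∈ T.diags)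
    (hd2 : ({(a : Fin n), ((a + 3 : ℕ) : Fin n)} : Finset (Fin n)) ∈ T.diags) :
    T.isTriangle {(a : Fin n), ((a + 2 : ℕ) : Fin n), ((a + 3 : ℕ) : Fin n)} := by
  have v0 : ((a : Fin n)).val = a := valc (by omega)
  have v1 : (((a+2 : ℕ) : Fin n)).val = a + 2 := valc (by omega)
  have v2 : (((a+3 : ℕ) : Fin n)).val = a + 3 := valc (by omega)
  refine ⟨_, _, _, ?_, ?_, ?_, rfl, Or.inr hd1, Or.inr hd2, ?_⟩
  · intro hh; have := congrArg Fin.val hh; omega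
  · intro hh; have := congrArg Fin.val hh; omega
  · intro hh; have := congrArg Fin.val hh; omega
  · have := bedge (n := n) (a := a + 2) (by omega)
    rw [show ((a+2)+1 : ℕ) = a + 3 by omega] at this
    exact Or.inl this


lemma two_of_three {α : Type*} [DecidableEq α] {a b c : α} {p : α → Prop} [DecidablePred p]
    (hab : a ≠ b) (hac : a ≠ c) (hbc : b ≠ c)
    (h : 2 ≤ (({a, b, c} : Finset α).filter p).card) :
    (p a ∧ p b) ∨ (p a ∧ p c) ∨ (p b ∧ p c) := by
  by_cases pa : p a <;> by_cases pb : p b <;> by_cases pc : p c <;>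
    simp [Finset.filter_insert, Finset.filter_singleton, pa, pb, pc,
      Finset.card_insert_of_notMem, hab, hac, hbc] at h ⊢ <;> tauto

lemma fiber_two [NeZero n] (hn : 5 ≤ n) {D : Finset (Finset (Fin n))}
    (hbd : ∀ e ∈ D, isBoundaryEdge n e) (k : ℕ) {x y : Fin n}
    (hx : ∃ e ∈ D, x ∈ e) (hy : ∃ e ∈ D, y ∈ e)
    (hxl : 5 * k + 1 ≤ x.val) (hxu : x.val ≤ 5 * k + 2)
    (hyl : x.val + 2 ≤ y.val) (hyu : y.val ≤ 5 * k + 4) :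
    2 ≤ (D.filter (fun e => idxE n e = k)).card := by
  obtain ⟨e1, he1, hxe⟩ := hx
  obtain ⟨e2, he2, hye⟩ := hy
  have hb1 := hbd e1 he1
  have hb2 := hbd e2 he2
  have hi1 : idxE n e1 = k := by
    rcases cov_idx hn hb1 hxe (by omega) with h | h <;> omega
  have hi2 : idxE n e2 = k := by
    rcases cov_idx hn hb2 hye (by omega) with h | h <;> omega
  have hne : e1 ≠ e2 := by
    intro hh
    exact not_same_edge hn hb1 hxe (hh ▸ hye) (by omega) hyl
  rw [show (2:ℕ) = 1 + 1 by rfl]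
  refine Nat.succ_le_of_lt (Finset.one_lt_card.mpr ⟨e1, ?_, e2, ?_, hne⟩)
  · exact Finset.mem_filter.mpr ⟨he1, hi1⟩
  · exact Finset.mem_filter.mpr ⟨he2, hi2⟩

lemma block_core [NeZero n] (hn : 5 ≤ n) (T : PolyTriangulation n)
    {D : Finset (Finset (Fin n))} (hD : EdgeTwoDominating T D) (k a : ℕ)
    (ha : a = 5 * k + 1) (hk : a + 3 < n)
    (hA : T.isTriangle {(a : Fin n), ((a + 1 : ℕ) : Fin n), ((a + 2 : ℕ) : Fin n)})
    (hB : T.isTriangle {(a : Fin n), ((a + 2 : ℕ) : Fin n), ((a + 3 : ℕ) : Fin n)}) :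
    2 ≤ (D.filter (fun e => idxE n e = k)).card := by
  have v0 : ((a : Fin n)).val = a := valc (by omega)
  have v1 : (((a+1 : ℕ) : Fin n)).val = a + 1 := valc (by omega)
  have v2 : (((a+2 : ℕ) : Fin n)).val = a + 2 := valc (by omega)
  have v3 : (((a+3 : ℕ) : Fin n)).val = a + 3 := valc (by omega)
  have hA2 := hD.2 _ hA
  have hB2 := hD.2 _ hB
  have hA3 := two_of_three (a := (a : Fin n)) (b := ((a+1:ℕ) : Fin n)) (c := ((a+2:ℕ) : Fin n))
    (by intro hh; have := congrArg Fin.val hh; omega)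
    (by intro hh; have := congrArg Fin.val hh; omega)
    (by intro hh; have := congrArg Fin.val hh; omega) hA2
  have hB3 := two_of_three (a := (a : Fin n)) (b := ((a+2:ℕ) : Fin n)) (c := ((a+3:ℕ) : Fin n))
    (by intro hh; have := congrArg Fin.val hh; omega)
    (by intro hh; have := congrArg Fin.val hh; omega)
    (by intro hh; have := congrArg Fin.val hh; omega) hB2
  rcases hB3 with ⟨c0, c2⟩ | ⟨c0, c3⟩ | ⟨c2, c3⟩
  · exact fiber_two hn hD.1 k c0 c2 (by omega) (by omega) (by omega) (by omega)
  · exact fiber_two hn hD.1 k c0 c3 (by omega) (by omega) (by omega) (by omega)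
  · -- covered: a+2 and a+3; use A to find covered in {a, a+1}
    rcases hA3 with ⟨c0, _⟩ | ⟨c0, _⟩ | ⟨c1, _⟩
    · exact fiber_two hn hD.1 k c0 c2 (by omega) (by omega) (by omega) (by omega)
    · exact fiber_two hn hD.1 k c0 c2 (by omega) (by omega) (by omega) (by omega)
    · exact fiber_two hn hD.1 k c1 c3 (by omega) (by omega) (by omega) (by omega)

lemma rem_core [NeZero n] (hn : 5 ≤ n) (T : PolyTriangulation n)
    {D : Finset (Finset (Fin n))} (hD : EdgeTwoDominating T D) (w : ℕ)
    (hw : w % 5 = 0) (h1 : 1 ≤ w) (hwu : w + 2 < n)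
    (hT : T.isTriangle {(w : Fin n), ((w + 1 : ℕ) : Fin n), ((w + 2 : ℕ) : Fin n)}) :
    1 ≤ (D.filter (fun e => idxE n e = w / 5)).card := by
  have v0 : ((w : Fin n)).val = w := valc (by omega)
  have v1 : (((w+1 : ℕ) : Fin n)).val = w + 1 := valc (by omega)
  have v2 : (((w+2 : ℕ) : Fin n)).val = w + 2 := valc (by omega)
  have hT2 := hD.2 _ hT
  have hT3 := two_of_three (a := (w : Fin n)) (b := ((w+1:ℕ) : Fin n)) (c := ((w+2:ℕ) : Fin n))
    (by intro hh; have := congrArg Fin.val hh; omega)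
    (by intro hh; have := congrArg Fin.val hh; omega)
    (by intro hh; have := congrArg Fin.val hh; omega) hT2
  have key : ∃ v : Fin n, (∃ e ∈ D, v ∈ e) ∧ (v.val = w + 1 ∨ v.val = w + 2) := by
    rcases hT3 with ⟨_, c1⟩ | ⟨_, c2⟩ | ⟨c1, _⟩
    · exact ⟨_, c1, Or.inl v1⟩
    · exact ⟨_, c2, Or.inr v2⟩
    · exact ⟨_, c1, Or.inl v1⟩
  obtain ⟨v, ⟨e, he, hve⟩, hv⟩ := key
  have hb := hD.1 e he
  have : idxE n e = w / 5 := by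
    rcases cov_idx hn hb hve (by omega) with h | h <;> omega
  refine Nat.succ_le_of_lt (Finset.card_pos.mpr ⟨e, Finset.mem_filter.mpr ⟨he, this⟩⟩)

end ETD

namespace ETD
open Fin.NatCast

set_option maxHeartbeats 4000000 in
/-- n = 5m+1, m ≥ 2 -/
def scheme1 (m : ℕ) (hm : 2 ≤ m) : Scheme (5 * m + 1) where
  M := 5 * m - 2
  fst := fun i => if i < 4 * m then (if i % 4 = 3 then 5 * (i / 4) else 5 * (i / 4) + 1) else 0
  snd := fun i => if i < 4 * m then
      (if i % 4 = 0 then 5 * (i / 4) + 3 else if i % 4 = 1 then 5 * (i / 4) + 4 else 5 * (i / 4) + 5)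
    else 5 * (i - 4 * m) + 10
  hM := by omega
  h1 := by intro i hi; beta_reduce; split_ifs <;> first | omega | (simp only [false_and, and_false, not_false_eq_true, and_true, true_and]; omega)
  h2 := by intro i hi j hj hf hs; beta_reduce at hf hs; split_ifs at hf hs <;> omega
  h3 := by intro i hi j hj ⟨a, b, c⟩; beta_reduce at a b c; split_ifs at a b c <;> omega

set_option maxHeartbeats 4000000 in
/-- n = 5m, m ≥ 2 -/
def scheme0 (m : ℕ) (hm : 2 ≤ m) : Scheme (5 * m) where
  M := 5 * m - 3
  fst := fun i => if i < 3 * m then (if i % 3 = 2 ∧ i / 3 = m - 1 then 0 else 5 * (i / 3) + 1)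
    else if i < 4 * m - 1 then 5 * (i - 3 * m) else 0
  snd := fun i => if i < 3 * m then
      (if i % 3 = 0 then 5 * (i / 3) + 3 else if i % 3 = 1 then 5 * (i / 3) + 4
       else if i / 3 = m - 1 then 5 * m - 4 else 5 * (i / 3) + 5)
    else if i < 4 * m - 1 then 5 * (i - 3 * m) + 5 else 5 * (i - (4 * m - 1)) + 10
  hM := by omega
  h1 := by intro i hi; beta_reduce; split_ifs <;> first | omega | (simp only [false_and, and_false, not_false_eq_true, and_true, true_and]; omega)
  h2 := by intro i hi j hj hf hs; beta_reduce at hf hs; split_ifs at hf hs <;> omega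
  h3 := by intro i hi j hj ⟨a, b, c⟩; beta_reduce at a b c; split_ifs at a b c <;> omega

set_option maxHeartbeats 4000000 in
/-- n = 5m+3, m ≥ 1 -/
def scheme3 (m : ℕ) (hm : 1 ≤ m) : Scheme (5 * m + 3) where
  M := 5 * m
  fst := fun i => if i < 4 * m then (if i % 4 = 3 then 5 * (i / 4) else 5 * (i / 4) + 1)
    else if i = 4 * m then 5 * m else 0
  snd := fun i => if i < 4 * m then
      (if i % 4 = 0 then 5 * (i / 4) + 3 else if i % 4 = 1 then 5 * (i / 4) + 4 else 5 * (i / 4) + 5)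
    else if i = 4 * m then 5 * m + 2 else 5 * (i - 4 * m) + 5
  hM := by omega
  h1 := by intro i hi; beta_reduce; split_ifs <;> first | omega | (simp only [false_and, and_false, not_false_eq_true, and_true, true_and]; omega)
  h2 := by intro i hi j hj hf hs; beta_reduce at hf hs; split_ifs at hf hs <;> omega
  h3 := by intro i hi j hj ⟨a, b, c⟩; beta_reduce at a b c; split_ifs at a b c <;> omega

set_option maxHeartbeats 4000000 in
/-- n = 5m+4, m ≥ 1 -/
def scheme4 (m : ℕ) (hm : 1 ≤ m) : Scheme (5 * m + 4) where
  M := 5 * m + 1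
  fst := fun i => if i < 4 * m then (if i % 4 = 3 then 5 * (i / 4) else 5 * (i / 4) + 1)
    else if i ≤ 4 * m + 1 then 5 * m else 0
  snd := fun i => if i < 4 * m then
      (if i % 4 = 0 then 5 * (i / 4) + 3 else if i % 4 = 1 then 5 * (i / 4) + 4 else 5 * (i / 4) + 5)
    else if i = 4 * m then 5 * m + 2 else if i = 4 * m + 1 then 5 * m + 3 else 5 * (i - 4 * m)
  hM := by omega
  h1 := by intro i hi; beta_reduce; split_ifs <;> first | omega | (simp only [false_and, and_false, not_false_eq_true, and_true, true_and]; omega)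
  h2 := by intro i hi j hj hf hs; beta_reduce at hf hs; split_ifs at hf hs <;> omega
  h3 := by intro i hi j hj ⟨a, b, c⟩; beta_reduce at a b c; split_ifs at a b c <;> omega

/-- n = 5 -/
def scheme5 : Scheme 5 where
  M := 2
  fst := fun _ => 1
  snd := fun i => if i = 0 then 3 else 4
  hM := by omega
  h1 := by intro i hi; beta_reduce; split_ifs <;> first | omega | (simp only [false_and, and_false, not_false_eq_true, and_true, true_and]; omega)
  h2 := by intro i hi j hj hf hs; beta_reduce at hf hs; split_ifs at hf hs <;> omega
  h3 := by intro i hi j hj ⟨a, b, c⟩; beta_reduce at a b c; split_ifs at a b c <;> omega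

/-- n = 6 -/
def scheme6 : Scheme 6 where
  M := 3
  fst := fun _ => 1
  snd := fun i => i + 3
  hM := by omega
  h1 := by intro i hi; beta_reduce; omega
  h2 := by intro i hi j hj hf hs; beta_reduce at hf hs; omega
  h3 := by intro i hi j hj ⟨a, b, c⟩; beta_reduce at a b c; omega


lemma case3 (m : ℕ) (hm : 1 ≤ m) :
    ∃ T : PolyTriangulation (5*m+3), ∀ D, EdgeTwoDominating T D → (2*(5*m+3)+1)/5 ≤ D.card := by
  haveI : NeZero (5*m+3) := ⟨by omega⟩
  refine ⟨(scheme3 m hm).tri, ?_⟩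
  intro D hD
  have hn : 5 ≤ 5*m+3 := by omega
  have hcard : D.card = ∑ k ∈ Finset.range (m+1),
      (D.filter (fun e => idxE (5*m+3) e = k)).card := by
    apply Finset.card_eq_sum_card_fiberwise
    intro e he
    have := idx_le hn (hD.1 e he)
    rw [Finset.mem_coe, Finset.mem_range]; omega
  have hblock : ∀ k ∈ Finset.range m, 2 ≤ (D.filter (fun e => idxE (5*m+3) e = k)).card := by
    intro k hk
    rw [Finset.mem_range] at hk
    have hd1 : ({((5*k+1 : ℕ) : Fin (5*m+3)), ((5*k+1+2 : ℕ) : Fin (5*m+3))} : Finset (Fin (5*m+3)))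
        ∈ (scheme3 m hm).tri.diags := by
      refine (scheme3 m hm).mem_diags ⟨4*k, ?_, ?_, ?_⟩ <;>
        simp only [scheme3] <;> (try beta_reduce) <;> (try split_ifs) <;> omega
    have hd2 : ({((5*k+1 : ℕ) : Fin (5*m+3)), ((5*k+1+3 : ℕ) : Fin (5*m+3))} : Finset (Fin (5*m+3)))
        ∈ (scheme3 m hm).tri.diags := by
      refine (scheme3 m hm).mem_diags ⟨4*k+1, ?_, ?_, ?_⟩ <;>
        simp only [scheme3] <;> (try beta_reduce) <;> (try split_ifs) <;> omega
    exact block_core hn _ hD k (5*k+1) rfl (by omega)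
      (tri_ear _ (by omega) hd1) (tri_skew _ (by omega) hd1 hd2)
  have hrem : 1 ≤ (D.filter (fun e => idxE (5*m+3) e = m)).card := by
    have hd : ({((5*m : ℕ) : Fin (5*m+3)), ((5*m+2 : ℕ) : Fin (5*m+3))} : Finset (Fin (5*m+3)))
        ∈ (scheme3 m hm).tri.diags := by
      refine (scheme3 m hm).mem_diags ⟨4*m, ?_, ?_, ?_⟩ <;>
        simp only [scheme3] <;> (try beta_reduce) <;> (try split_ifs) <;> omega
    have h5 : (5*m)/5 = m := by omega
    have := rem_core hn _ hD (5*m) (by omega) (by omega) (by omega)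
      (tri_ear _ (by omega) hd)
    rwa [h5] at this
  have hsum := Finset.sum_le_sum hblock
  rw [Finset.sum_const, Finset.card_range, smul_eq_mul] at hsum
  rw [hcard, Finset.sum_range_succ]
  omega

lemma case4 (m : ℕ) (hm : 1 ≤ m) :
    ∃ T : PolyTriangulation (5*m+4), ∀ D, EdgeTwoDominating T D → (2*(5*m+4)+1)/5 ≤ D.card := by
  haveI : NeZero (5*m+4) := ⟨by omega⟩
  refine ⟨(scheme4 m hm).tri, ?_⟩
  intro D hD
  have hn : 5 ≤ 5*m+4 := by omega
  have hcard : D.card = ∑ k ∈ Finset.range (m+1),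
      (D.filter (fun e => idxE (5*m+4) e = k)).card := by
    apply Finset.card_eq_sum_card_fiberwise
    intro e he
    have := idx_le hn (hD.1 e he)
    rw [Finset.mem_coe, Finset.mem_range]; omega
  have hblock : ∀ k ∈ Finset.range m, 2 ≤ (D.filter (fun e => idxE (5*m+4) e = k)).card := by
    intro k hk
    rw [Finset.mem_range] at hk
    have hd1 : ({((5*k+1 : ℕ) : Fin (5*m+4)), ((5*k+1+2 : ℕ) : Fin (5*m+4))} : Finset (Fin (5*m+4)))
        ∈ (scheme4 m hm).tri.diags := by
      refine (scheme4 m hm).mem_diags ⟨4*k, ?_, ?_, ?_⟩ <;>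
        simp only [scheme4] <;> (try beta_reduce) <;> (try split_ifs) <;> omega
    have hd2 : ({((5*k+1 : ℕ) : Fin (5*m+4)), ((5*k+1+3 : ℕ) : Fin (5*m+4))} : Finset (Fin (5*m+4)))
        ∈ (scheme4 m hm).tri.diags := by
      refine (scheme4 m hm).mem_diags ⟨4*k+1, ?_, ?_, ?_⟩ <;>
        simp only [scheme4] <;> (try beta_reduce) <;> (try split_ifs) <;> omega
    exact block_core hn _ hD k (5*k+1) rfl (by omega)
      (tri_ear _ (by omega) hd1) (tri_skew _ (by omega) hd1 hd2)
  have hrem : 1 ≤ (D.filter (fun e => idxE (5*m+4) e = m)).card := by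
    have hd : ({((5*m : ℕ) : Fin (5*m+4)), ((5*m+2 : ℕ) : Fin (5*m+4))} : Finset (Fin (5*m+4)))
        ∈ (scheme4 m hm).tri.diags := by
      refine (scheme4 m hm).mem_diags ⟨4*m, ?_, ?_, ?_⟩ <;>
        simp only [scheme4] <;> (try beta_reduce) <;> (try split_ifs) <;> omega
    have h5 : (5*m)/5 = m := by omega
    have := rem_core hn _ hD (5*m) (by omega) (by omega) (by omega)
      (tri_ear _ (by omega) hd)
    rwa [h5] at this
  have hsum := Finset.sum_le_sum hblock
  rw [Finset.sum_const, Finset.card_range, smul_eq_mul] at hsum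
  rw [hcard, Finset.sum_range_succ]
  omega

lemma case1 (m : ℕ) (hm : 2 ≤ m) :
    ∃ T : PolyTriangulation (5*m+1), ∀ D, EdgeTwoDominating T D → (2*(5*m+1)+1)/5 ≤ D.card := by
  haveI : NeZero (5*m+1) := ⟨by omega⟩
  refine ⟨(scheme1 m hm).tri, ?_⟩
  intro D hD
  have hn : 5 ≤ 5*m+1 := by omega
  have hcard : D.card = ∑ k ∈ Finset.range (m+1),
      (D.filter (fun e => idxE (5*m+1) e = k)).card := by
    apply Finset.card_eq_sum_card_fiberwise
    intro e he
    have := idx_le hn (hD.1 e he)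
    rw [Finset.mem_coe, Finset.mem_range]; omega
  have hblock : ∀ k ∈ Finset.range m, 2 ≤ (D.filter (fun e => idxE (5*m+1) e = k)).card := by
    intro k hk
    rw [Finset.mem_range] at hk
    have hd1 : ({((5*k+1 : ℕ) : Fin (5*m+1)), ((5*k+1+2 : ℕ) : Fin (5*m+1))} : Finset (Fin (5*m+1)))
        ∈ (scheme1 m hm).tri.diags := by
      refine (scheme1 m hm).mem_diags ⟨4*k, ?_, ?_, ?_⟩ <;>
        simp only [scheme1] <;> (try beta_reduce) <;> (try split_ifs) <;> omega
    have hd2 : ({((5*k+1 : ℕ) : Fin (5*m+1)), ((5*k+1+3 : ℕ) : Fin (5*m+1))} : Finset (Fin (5*m+1)))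
        ∈ (scheme1 m hm).tri.diags := by
      refine (scheme1 m hm).mem_diags ⟨4*k+1, ?_, ?_, ?_⟩ <;>
        simp only [scheme1] <;> (try beta_reduce) <;> (try split_ifs) <;> omega
    exact block_core hn _ hD k (5*k+1) rfl (by omega)
      (tri_ear _ (by omega) hd1) (tri_skew _ (by omega) hd1 hd2)
  have hsum := Finset.sum_le_sum hblock
  rw [Finset.sum_const, Finset.card_range, smul_eq_mul] at hsum
  rw [hcard, Finset.sum_range_succ]
  omega

lemma case0 (m : ℕ) (hm : 2 ≤ m) :
    ∃ T : PolyTriangulation (5*m), ∀ D, EdgeTwoDominating T D → (2*(5*m)+1)/5 ≤ D.card := by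
  haveI : NeZero (5*m) := ⟨by omega⟩
  refine ⟨(scheme0 m hm).tri, ?_⟩
  intro D hD
  have hn : 5 ≤ 5*m := by omega
  have hcard : D.card = ∑ k ∈ Finset.range m,
      (D.filter (fun e => idxE (5*m) e = k)).card := by
    apply Finset.card_eq_sum_card_fiberwise
    intro e he
    have := idx_le hn (hD.1 e he)
    rw [Finset.mem_coe, Finset.mem_range]; omega
  have hblock : ∀ k ∈ Finset.range m, 2 ≤ (D.filter (fun e => idxE (5*m) e = k)).card := by
    intro k hk
    rw [Finset.mem_range] at hk
    have hd1 : ({((5*k+1 : ℕ) : Fin (5*m)), ((5*k+1+2 : ℕ) : Fin (5*m))} : Finset (Fin (5*m)))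
        ∈ (scheme0 m hm).tri.diags := by
      refine (scheme0 m hm).mem_diags ⟨3*k, ?_, ?_, ?_⟩ <;>
        simp only [scheme0] <;> (try beta_reduce) <;> (try split_ifs) <;> omega
    have hd2 : ({((5*k+1 : ℕ) : Fin (5*m)), ((5*k+1+3 : ℕ) : Fin (5*m))} : Finset (Fin (5*m)))
        ∈ (scheme0 m hm).tri.diags := by
      refine (scheme0 m hm).mem_diags ⟨3*k+1, ?_, ?_, ?_⟩ <;>
        simp only [scheme0] <;> (try beta_reduce) <;> (try split_ifs) <;> omega
    exact block_core hn _ hD k (5*k+1) rfl (by omega)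
      (tri_ear _ (by omega) hd1) (tri_skew _ (by omega) hd1 hd2)
  have hsum := Finset.sum_le_sum hblock
  rw [Finset.sum_const, Finset.card_range, smul_eq_mul] at hsum
  rw [hcard]
  omega

lemma case5 : ∃ T : PolyTriangulation (5*1),
    ∀ D, EdgeTwoDominating T D → (2*(5*1)+1)/5 ≤ D.card := by
  haveI : NeZero (5*1) := ⟨by omega⟩
  refine ⟨scheme5.tri, ?_⟩
  intro D hD
  have hn : 5 ≤ 5*1 := by omega
  have hd1 : ({((1 : ℕ) : Fin (5*1)), ((1+2 : ℕ) : Fin (5*1))} : Finset (Fin (5*1)))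
      ∈ scheme5.tri.diags := by
    refine scheme5.mem_diags ⟨0, ?_, ?_, ?_⟩  <;> norm_num [scheme5]
  have hd2 : ({((1 : ℕ) : Fin (5*1)), ((1+3 : ℕ) : Fin (5*1))} : Finset (Fin (5*1)))
      ∈ scheme5.tri.diags := by
    refine scheme5.mem_diags ⟨1, ?_, ?_, ?_⟩  <;> norm_num [scheme5]
  have h2 := block_core hn _ hD 0 1 (by omega) (by omega)
    (tri_ear _ (by omega) hd1) (tri_skew _ (by omega) hd1 hd2)
  have := Finset.card_le_card (Finset.filter_subset (fun e => idxE (5*1) e = 0) D)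
  omega

lemma case6 : ∃ T : PolyTriangulation (5*1+1),
    ∀ D, EdgeTwoDominating T D → (2*(5*1+1)+1)/5 ≤ D.card := by
  haveI : NeZero (5*1+1) := ⟨by omega⟩
  refine ⟨scheme6.tri, ?_⟩
  intro D hD
  have hn : 5 ≤ 5*1+1 := by omega
  have hd1 : ({((1 : ℕ) : Fin (5*1+1)), ((1+2 : ℕ) : Fin (5*1+1))} : Finset (Fin (5*1+1)))
      ∈ scheme6.tri.diags := by
    refine scheme6.mem_diags ⟨0, ?_, ?_, ?_⟩ <;> norm_num [scheme6]
  have hd2 : ({((1 : ℕ) : Fin (5*1+1)), ((1+3 : ℕ) : Fin (5*1+1))} : Finset (Fin (5*1+1)))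
      ∈ scheme6.tri.diags := by
    refine scheme6.mem_diags ⟨1, ?_, ?_, ?_⟩ <;> norm_num [scheme6]
  have h2 := block_core hn _ hD 0 1 (by omega) (by omega)
    (tri_ear _ (by omega) hd1) (tri_skew _ (by omega) hd1 hd2)
  have := Finset.card_le_card (Finset.filter_subset (fun e => idxE (5*1+1) e = 0) D)
  omega

end ETD

/-- for every `m ≥ 1` there exist triangulation graphs with
`n = 5m, 5m+1, 5m+3, 5m+4` vertices each of whose edge 2-dominating sets has
size at least `⌊(2n+1)/5⌋`. -/
theorem edge_lower_bound_family (m : ℕ) (hm : 1 ≤ m) :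
    (∃ T : PolyTriangulation (5 * m),
      ∀ D, EdgeTwoDominating T D → (2 * (5 * m) + 1) / 5 ≤ D.card) ∧
    (∃ T : PolyTriangulation (5 * m + 1),
      ∀ D, EdgeTwoDominating T D → (2 * (5 * m + 1) + 1) / 5 ≤ D.card) ∧
    (∃ T : PolyTriangulation (5 * m + 3),
      ∀ D, EdgeTwoDominating T D → (2 * (5 * m + 3) + 1) / 5 ≤ D.card) ∧
    (∃ T : PolyTriangulation (5 * m + 4),
      ∀ D, EdgeTwoDominating T D → (2 * (5 * m + 4) + 1) / 5 ≤ D.card) := by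
  refine ⟨?_, ?_, ETD.case3 m hm, ETD.case4 m hm⟩
  · by_cases h : m = 1
    · subst h; exact ETD.case5
    · exact ETD.case0 m (by omega)
  · by_cases h : m = 1
    · subst h; exact ETD.case6
    · exact ETD.case1 m (by omega)
end
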